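/- For each positive integer N there exist polynomials a_0(N,x), ..., a_{N-1}(N,x) in x such that the N-th partial derivative of F(t,x) = e^{x(1-\sqrt{1-2t})} with respect to t equals (\sum_{i=N}^{2N-1} a_{i-N}(N,x) (1-2t)^{-i/2}) F(t,x) for all t < 1/2, and these coefficients satisfy a_0(N,x) = x^N. -/

import Mathlib

open Real Finset

noncomputable def F (x t : ℝ) : ℝ := Real.exp (x * (1 - Real.sqrt (1 - 2 * t)))


lemma hpos {t : ℝ} (ht : t < 1/2) : (0:ℝ) < 1 - 2*t := by linarith

lemma hasDerivAt_rp (c : ℝ) {t : ℝ} (ht : t < 1/2) :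
    HasDerivAt (fun t : ℝ => (1 - 2*t) ^ c) (-2 * c * (1 - 2*t) ^ (c - 1)) t := by
  have h1 : HasDerivAt (fun t : ℝ => 1 - 2*t) (-2) t := by
    simpa using ((hasDerivAt_const t (1:ℝ)).fun_sub ((hasDerivAt_id t).const_mul 2))
  have := h1.rpow_const (p := c) (Or.inl (ne_of_gt (hpos ht)))
  convert this using 1

lemma rp_half {t : ℝ} (ht : t < 1/2) : (1 - 2*t) ^ (-(1:ℝ)/2) = 1 / Real.sqrt (1 - 2*t) := by
  rw [show (-(1:ℝ)/2) = -(1/2) by ring, Real.rpow_neg (le_of_lt (hpos ht)),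
    ← Real.sqrt_eq_rpow, one_div]

lemma hasDerivAt_F (x : ℝ) {t : ℝ} (ht : t < 1/2) :
    HasDerivAt (F x) (x * (1 - 2*t) ^ (-(1:ℝ)/2) * F x t) t := by
  have h1 : HasDerivAt (fun t : ℝ => 1 - 2*t) (-2) t := by
    simpa using ((hasDerivAt_const t (1:ℝ)).fun_sub ((hasDerivAt_id t).const_mul 2))
  have hs : HasDerivAt (fun t : ℝ => Real.sqrt (1 - 2*t))
      (1 / (2 * Real.sqrt (1 - 2*t)) * (-2)) t :=
    (Real.hasDerivAt_sqrt (ne_of_gt (hpos ht))).comp t h1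
  have hsq : (0:ℝ) < Real.sqrt (1 - 2*t) := Real.sqrt_pos.mpr (hpos ht)
  have hinner : HasDerivAt (fun t : ℝ => x * (1 - Real.sqrt (1 - 2*t)))
      (x * (1 - 2*t) ^ (-(1:ℝ)/2)) t := by
    have := ((hasDerivAt_const t (1:ℝ)).fun_sub hs).const_mul x
    refine this.congr_deriv (Eq.symm ?_)
    rw [rp_half ht]
    field_simp
    ring
  have h := hinner.exp
  rw [show F x = fun t => Real.exp (x * (1 - Real.sqrt (1 - 2*t))) from rfl]
  simpa [mul_comm] using h

lemma term_deriv (c m x : ℝ) {t : ℝ} (ht : t < 1/2) :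
    HasDerivAt (fun s : ℝ => c * (1 - 2*s) ^ (-m/2) * F x s)
      (c * m * (1 - 2*t) ^ (-(m+2)/2) * F x t
        + c * x * (1 - 2*t) ^ (-(m+1)/2) * F x t) t := by
  have h := ((hasDerivAt_rp (-m/2) ht).const_mul c).fun_mul (hasDerivAt_F x ht)
  refine h.congr_deriv (Eq.symm ?_)
  have h1 : -m/2 - 1 = -(m+2)/2 := by ring
  have h2 : (1 - 2*t) ^ (-m/2) * (1 - 2*t) ^ (-(1:ℝ)/2) = (1 - 2*t) ^ (-(m+1)/2) := by
    rw [← Real.rpow_add (hpos ht)]; ring_nf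
  rw [h1] at *
  calc c * m * (1 - 2*t) ^ (-(m+2)/2) * F x t + c * x * (1 - 2*t) ^ (-(m+1)/2) * F x t
      = c * m * (1 - 2*t) ^ (-(m+2)/2) * F x t
        + c * x * ((1 - 2*t) ^ (-m/2) * (1 - 2*t) ^ (-(1:ℝ)/2)) * F x t := by rw [h2]
    _ = c * (-2 * (-m/2) * (1 - 2*t) ^ (-(m+2)/2)) * F x t
        + c * (1 - 2*t) ^ (-m/2) * (x * (1 - 2*t) ^ (-(1:ℝ)/2) * F x t) := by ring

open Finset Polynomial in
lemma key : ∀ N : ℕ, 1 ≤ N → ∃ a : ℕ → Polynomial ℝ,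
    (∀ x t : ℝ, t < 1/2 →
      iteratedDeriv N (F x) t =
        (∑ j ∈ Finset.range N, (a j).eval x * (1 - 2*t) ^ (-((N:ℝ)+j)/2)) * F x t) ∧
    a 0 = Polynomial.X ^ N := by
  intro N hN
  induction N, hN using Nat.le_induction with
  | base =>
    refine ⟨fun _ => Polynomial.X, fun x t ht => ?_, by simp⟩
    rw [iteratedDeriv_one, (hasDerivAt_F x ht).deriv]
    norm_num
  | succ N hN ih =>
    obtain ⟨a, ha, ha0⟩ := ih
    refine ⟨fun j => (if j < N then Polynomial.X * a j else 0)
        + (if 0 < j then Polynomial.C ((N:ℝ)+j-1) * a (j-1) else 0),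
      fun x t ht => ?_, by have h0 : 0 < N := hN; simp [h0, ha0, pow_succ, mul_comm]⟩
    -- derivative of the explicit formula
    have hG : HasDerivAt
        (fun s : ℝ => ∑ j ∈ Finset.range N,
          (a j).eval x * (1 - 2*s) ^ (-(((N:ℝ)+j))/2) * F x s)
        (∑ j ∈ Finset.range N,
          ((a j).eval x * ((N:ℝ)+j) * (1 - 2*t) ^ (-(((N:ℝ)+j)+2)/2) * F x t
            + (a j).eval x * x * (1 - 2*t) ^ (-(((N:ℝ)+j)+1)/2) * F x t)) t :=
      HasDerivAt.fun_sum (fun j _ => term_deriv ((a j).eval x) ((N:ℝ)+j) x ht)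
    -- identify iteratedDeriv (N+1) with deriv of the formula
    have hev : iteratedDeriv N (F x) =ᶠ[nhds t]
        (fun s : ℝ => ∑ j ∈ Finset.range N,
          (a j).eval x * (1 - 2*s) ^ (-(((N:ℝ)+j))/2) * F x s) := by
      filter_upwards [Iio_mem_nhds ht] with s hs
      rw [ha x s hs, Finset.sum_mul]
    rw [iteratedDeriv_succ, hev.deriv_eq, hG.deriv]
    -- algebraic identity between the two sums
    rw [Finset.sum_mul, Finset.sum_add_distrib]
    have hx : ∀ j : ℕ, ((if j < N then Polynomial.X * a j else 0)
        + (if 0 < j then Polynomial.C ((N:ℝ)+j-1) * a (j-1) else 0)).eval x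
        = (if j < N then x * (a j).eval x else 0)
          + (if 0 < j then ((N:ℝ)+j-1) * (a (j-1)).eval x else 0) := by
      intro j; split_ifs <;> simp
    simp only [hx, add_mul]
    rw [Finset.sum_add_distrib, add_comm]
    congr 1
    · -- x-terms
      rw [Finset.sum_range_succ, if_neg (lt_irrefl N), zero_mul, zero_mul, add_zero]
      refine Finset.sum_congr rfl fun j hj => ?_
      rw [if_pos (Finset.mem_range.mp hj)]
      push_cast
      ring_nf
    · -- shifted terms
      rw [Finset.sum_range_succ']
      simp only [Nat.succ_pos, if_true, Nat.add_sub_cancel, lt_irrefl, if_false,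
        zero_mul, add_zero]
      refine Finset.sum_congr rfl fun j hj => ?_
      push_cast
      ring_nf


theorem exists_coeffs_for_Nth_deriv (N : ℕ) (hN : 1 ≤ N) :
    ∃ a : ℕ → Polynomial ℝ,
      (∀ x t : ℝ, t < 1 / 2 →
        iteratedDeriv N (F x) t =
          (∑ i ∈ Finset.Icc N (2 * N - 1),
            (a (i - N)).eval x * (1 - 2 * t) ^ (-(i : ℝ) / 2)) * F x t) ∧
      a 0 = Polynomial.X ^ N := by
  obtain ⟨a, ha, ha0⟩ := key N hN
  refine ⟨a, fun x t ht => ?_, ha0⟩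
  rw [ha x t ht]
  congr 1
  refine Finset.sum_nbij' (fun j => N + j) (fun i => i - N)
    (fun j hj => ?_) (fun i hi => ?_) (fun j hj => ?_) (fun i hi => ?_) (fun j hj => ?_)
  · simp only [Finset.mem_range] at hj; simp only [Finset.mem_Icc]; omega
  · simp only [Finset.mem_Icc] at hi; simp only [Finset.mem_range]; omega
  · omega
  · simp only [Finset.mem_Icc] at hi; omega
  · rw [Nat.add_sub_cancel_left]
    push_cast
    ring_nf
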